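/- (Variation identity for E⁻¹, exact two-weight form: δE⁻¹ = −E⁻¹·δW⁻¹·G₊ − G₋·δW·E⁻¹.) Let W₁ and W₂ both be measurable weights bounded between positive constants, with associated operators E₁⁻¹, E₂⁻¹, with G₊⁽²⁾ built from W₂ and G₋⁽¹⁾ built from W₁. Then for every integrable h : α → ℝ and every x ∈ α: (E₂⁻¹ h)(x) − (E₁⁻¹ h)(x) = − E₁⁻¹( (W₂⁻¹ − W₁⁻¹) · (G₊⁽²⁾ h) )(x) − G₋⁽¹⁾( (W₂ − W₁) · (E₂⁻¹ h) )(x). -/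

import Mathlib

open MeasureTheory

/-- Total (coordinate) volume `V := μ(α)` as a real number. -/
noncomputable def totalVol {α : Type*} [MeasurableSpace α] (μ : Measure α) : ℝ :=
  (μ Set.univ).toReal

/-- Spatial average `⟨f⟩ := (1/V) ∫ f dμ`. -/
noncomputable def avg {α : Type*} [MeasurableSpace α] (μ : Measure α) (f : α → ℝ) : ℝ :=
  (totalVol μ)⁻¹ * ∫ x, f x ∂μ

/-- The delocalization operator `E`:
`(E g)(x) = g(x) + ⟨g⟩ − W(x)⁻¹ ⟨W·g⟩`. -/
noncomputable def opE {α : Type*} [MeasurableSpace α] (μ : Measure α) (W : α → ℝ)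
    (g : α → ℝ) : α → ℝ :=
  fun x => g x + avg μ g - (W x)⁻¹ * avg μ (fun y => W y * g y)

/-- The operator `E⁻¹`:
`(E⁻¹ h)(x) = h(x) − W(x)⁻¹ (∫h)/(∫W⁻¹) − (∫W·h)/(∫W) + 2 W(x)⁻¹ V (∫W·h)/((∫W⁻¹)(∫W))`. -/
noncomputable def opEinv {α : Type*} [MeasurableSpace α] (μ : Measure α) (W : α → ℝ)
    (h : α → ℝ) : α → ℝ :=
  fun x => h x
    - (W x)⁻¹ * (∫ y, h y ∂μ) / (∫ y, (W y)⁻¹ ∂μ)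
    - (∫ y, W y * h y ∂μ) / (∫ y, W y ∂μ)
    + 2 * (W x)⁻¹ * totalVol μ * (∫ y, W y * h y ∂μ)
        / ((∫ y, (W y)⁻¹ ∂μ) * (∫ y, W y ∂μ))

/-- The projector-type operator `G₊`:
`(G₊ h)(x) = W(x)·h(x) − W(x)·(∫W·h)/(∫W)`. -/
noncomputable def opGplus {α : Type*} [MeasurableSpace α] (μ : Measure α) (W : α → ℝ)
    (h : α → ℝ) : α → ℝ :=
  fun x => W x * h x - W x * (∫ y, W y * h y ∂μ) / (∫ y, W y ∂μ)

/-- The projector-type operator `G₋`: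
`(G₋ h)(x) = W(x)⁻¹·h(x) − W(x)⁻¹·(∫W⁻¹·h)/(∫W⁻¹)`. -/
noncomputable def opGminus {α : Type*} [MeasurableSpace α] (μ : Measure α) (W : α → ℝ)
    (h : α → ℝ) : α → ℝ :=
  fun x => (W x)⁻¹ * h x - (W x)⁻¹ * (∫ y, (W y)⁻¹ * h y ∂μ) / (∫ y, (W y)⁻¹ ∂μ)


section Aux

open MeasureTheory

private lemma aux_int {α : Type*} [MeasurableSpace α] {μ : Measure α}
    {φ : α → ℝ} (hφ : Measurable φ) (M : ℝ) (hb : ∀ x, ‖φ x‖ ≤ M)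
    {h : α → ℝ} (hh : Integrable h μ) :
    Integrable (fun y => φ y * h y) μ :=
  hh.bdd_mul hφ.aestronglyMeasurable (Filter.Eventually.of_forall hb)

private lemma aux_pos {α : Type*} [MeasurableSpace α] (μ : Measure α) [IsFiniteMeasure μ]
    (hV : 0 < totalVol μ) {φ : α → ℝ} {c : ℝ} (hc : 0 < c)
    (hφint : Integrable φ μ) (hb : ∀ x, c ≤ φ x) :
    0 < ∫ y, φ y ∂μ := by
  have h1 : ∫ (_ : α), c ∂μ ≤ ∫ y, φ y ∂μ := integral_mono (integrable_const c) hφint hb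
  have h2 : ∫ (_ : α), c ∂μ = totalVol μ * c := by
    simp [integral_const, totalVol, smul_eq_mul, mul_comm, Measure.real]
  nlinarith

end Aux

set_option maxHeartbeats 2000000 in
/-- Variation identity for `E⁻¹`, exact two-weight form:
`δE⁻¹ = −E⁻¹·δW⁻¹·G₊ − G₋·δW·E⁻¹`. For weights `W₁, W₂` bounded between positive
constants, with `E₁⁻¹, E₂⁻¹` the corresponding inverse operators, `G₊⁽²⁾` built from `W₂`
and `G₋⁽¹⁾` built from `W₁`, for every integrable `h` and every `x`:
`(E₂⁻¹ h)(x) − (E₁⁻¹ h)(x)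
  = − E₁⁻¹((W₂⁻¹ − W₁⁻¹)·(G₊⁽²⁾ h))(x) − G₋⁽¹⁾((W₂ − W₁)·(E₂⁻¹ h))(x)`. -/


theorem opEinv_variation_two_weights
    {α : Type*} [MeasurableSpace α] (μ : Measure α) [IsFiniteMeasure μ]
    (hV : 0 < totalVol μ)
    (W₁ W₂ : α → ℝ) (hW₁ : Measurable W₁) (hW₂ : Measurable W₂)
    (c₁ C₁ : ℝ) (hc₁ : 0 < c₁) (hcC₁ : c₁ ≤ C₁)
    (hbound₁ : ∀ x, c₁ ≤ W₁ x ∧ W₁ x ≤ C₁)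
    (c₂ C₂ : ℝ) (hc₂ : 0 < c₂) (hcC₂ : c₂ ≤ C₂)
    (hbound₂ : ∀ x, c₂ ≤ W₂ x ∧ W₂ x ≤ C₂) :
    ∀ h : α → ℝ, Integrable h μ → ∀ x,
      opEinv μ W₂ h x - opEinv μ W₁ h x
        = - opEinv μ W₁ (fun y => ((W₂ y)⁻¹ - (W₁ y)⁻¹) * opGplus μ W₂ h y) x
          - opGminus μ W₁ (fun y => (W₂ y - W₁ y) * opEinv μ W₂ h y) x := by
  intro h hh x
  -- basic positivity of weights
  have hC₁ : 0 < C₁ := lt_of_lt_of_le hc₁ hcC₁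
  have hC₂ : 0 < C₂ := lt_of_lt_of_le hc₂ hcC₂
  have hW₁pos : ∀ y, 0 < W₁ y := fun y => lt_of_lt_of_le hc₁ (hbound₁ y).1
  have hW₂pos : ∀ y, 0 < W₂ y := fun y => lt_of_lt_of_le hc₂ (hbound₂ y).1
  have hw1x : W₁ x ≠ 0 := (hW₁pos x).ne'
  have hw2x : W₂ x ≠ 0 := (hW₂pos x).ne'
  -- norm bounds
  have hbW₁ : ∀ y, ‖W₁ y‖ ≤ C₁ := fun y => by
    rw [Real.norm_eq_abs, abs_of_pos (hW₁pos y)]; exact (hbound₁ y).2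
  have hbW₂ : ∀ y, ‖W₂ y‖ ≤ C₂ := fun y => by
    rw [Real.norm_eq_abs, abs_of_pos (hW₂pos y)]; exact (hbound₂ y).2
  have hbW₁inv : ∀ y, ‖(W₁ y)⁻¹‖ ≤ c₁⁻¹ := fun y => by
    rw [Real.norm_eq_abs, abs_of_pos (inv_pos.mpr (hW₁pos y))]
    exact inv_anti₀ hc₁ (hbound₁ y).1
  have hbW₂inv : ∀ y, ‖(W₂ y)⁻¹‖ ≤ c₂⁻¹ := fun y => by
    rw [Real.norm_eq_abs, abs_of_pos (inv_pos.mpr (hW₂pos y))]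
    exact inv_anti₀ hc₂ (hbound₂ y).1
  -- integrability
  have hiW1h : Integrable (fun y => W₁ y * h y) μ := aux_int hW₁ C₁ hbW₁ hh
  have hiW2h : Integrable (fun y => W₂ y * h y) μ := aux_int hW₂ C₂ hbW₂ hh
  have hiK : Integrable (fun y => (W₁ y)⁻¹ * (W₂ y * h y)) μ :=
    aux_int hW₁.inv c₁⁻¹ hbW₁inv hiW2h
  have hiW1 : Integrable W₁ μ := by
    simpa using aux_int hW₁ C₁ hbW₁ (integrable_const (1 : ℝ))
  have hiW2 : Integrable W₂ μ := by
    simpa using aux_int hW₂ C₂ hbW₂ (integrable_const (1 : ℝ))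
  have hiW1inv : Integrable (fun y => (W₁ y)⁻¹) μ := by
    simpa using aux_int hW₁.inv c₁⁻¹ hbW₁inv (integrable_const (1 : ℝ))
  have hiW2inv : Integrable (fun y => (W₂ y)⁻¹) μ := by
    simpa using aux_int hW₂.inv c₂⁻¹ hbW₂inv (integrable_const (1 : ℝ))
  have hiL : Integrable (fun y => (W₁ y)⁻¹ * W₂ y) μ :=
    aux_int hW₁.inv c₁⁻¹ hbW₁inv hiW2
  -- positivity of the integrals
  have hA₁ : 0 < ∫ y, (W₁ y)⁻¹ ∂μ :=
    aux_pos μ hV (inv_pos.mpr hC₁) hiW1inv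
      (fun y => inv_anti₀ (hW₁pos y) (hbound₁ y).2)
  have hA₂ : 0 < ∫ y, (W₂ y)⁻¹ ∂μ :=
    aux_pos μ hV (inv_pos.mpr hC₂) hiW2inv
      (fun y => inv_anti₀ (hW₂pos y) (hbound₂ y).2)
  have hB₁ : 0 < ∫ y, W₁ y ∂μ :=
    aux_pos μ hV hc₁ hiW1 (fun y => (hbound₁ y).1)
  have hB₂ : 0 < ∫ y, W₂ y ∂μ :=
    aux_pos μ hV hc₂ hiW2 (fun y => (hbound₂ y).1)
  have hA₁' := hA₁.ne'
  have hA₂' := hA₂.ne'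
  have hB₁' := hB₁.ne'
  have hB₂' := hB₂.ne'
  -- shorthand
  set V := totalVol μ with hVdef
  set I := ∫ y, h y ∂μ with hIdef
  set J₁ := ∫ y, W₁ y * h y ∂μ with hJ1def
  set J₂ := ∫ y, W₂ y * h y ∂μ with hJ2def
  set A₁ := ∫ y, (W₁ y)⁻¹ ∂μ with hA1def
  set A₂ := ∫ y, (W₂ y)⁻¹ ∂μ with hA2def
  set B₁ := ∫ y, W₁ y ∂μ with hB1def
  set B₂ := ∫ y, W₂ y ∂μ with hB2def
  set K := ∫ y, (W₁ y)⁻¹ * (W₂ y * h y) ∂μ with hKdef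
  set L := ∫ y, (W₁ y)⁻¹ * W₂ y ∂μ with hLdef
  have hVint : ∫ (_ : α), (1 : ℝ) ∂μ = V := by
    simp [hVdef, integral_const, totalVol, smul_eq_mul, Measure.real]
  -- the three integral computations
  have hSf : ∫ y, ((W₂ y)⁻¹ - (W₁ y)⁻¹) * opGplus μ W₂ h y ∂μ
      = (I - K) - (J₂ / B₂) * (V - L) := by
    have hfe : (fun y => ((W₂ y)⁻¹ - (W₁ y)⁻¹) * opGplus μ W₂ h y)
        = fun y => (h y - (W₁ y)⁻¹ * (W₂ y * h y))
            - (J₂ / B₂) * ((1 : ℝ) - (W₁ y)⁻¹ * W₂ y) := by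
      funext y
      have h1 : W₁ y ≠ 0 := (hW₁pos y).ne'
      have h2 : W₂ y ≠ 0 := (hW₂pos y).ne'
      simp only [opGplus, ← hJ2def, ← hB2def]
      field_simp
    rw [hfe, integral_sub (f := fun y => h y - (W₁ y)⁻¹ * (W₂ y * h y))
        (g := fun y => J₂ / B₂ * ((1 : ℝ) - (W₁ y)⁻¹ * W₂ y))
        (by exact hh.sub hiK) (by exact ((integrable_const (1 : ℝ)).sub hiL).const_mul _),
      integral_sub (f := h) (g := fun y => (W₁ y)⁻¹ * (W₂ y * h y)) hh hiK,
      integral_const_mul,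
      integral_sub (f := fun _ => (1 : ℝ)) (g := fun y => (W₁ y)⁻¹ * W₂ y)
        (integrable_const (1 : ℝ)) hiL, hVint]
  have hSW1f : ∫ y, W₁ y * (((W₂ y)⁻¹ - (W₁ y)⁻¹) * opGplus μ W₂ h y) ∂μ
      = (J₁ - J₂) - (J₂ / B₂) * (B₁ - B₂) := by
    have hfe : (fun y => W₁ y * (((W₂ y)⁻¹ - (W₁ y)⁻¹) * opGplus μ W₂ h y))
        = fun y => (W₁ y * h y - W₂ y * h y) - (J₂ / B₂) * (W₁ y - W₂ y) := by
      funext y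
      have h1 : W₁ y ≠ 0 := (hW₁pos y).ne'
      have h2 : W₂ y ≠ 0 := (hW₂pos y).ne'
      simp only [opGplus, ← hJ2def, ← hB2def]
      field_simp
    rw [hfe, integral_sub (f := fun y => W₁ y * h y - W₂ y * h y)
        (g := fun y => J₂ / B₂ * (W₁ y - W₂ y))
        (by exact hiW1h.sub hiW2h) (by exact (hiW1.sub hiW2).const_mul _),
      integral_sub (f := fun y => W₁ y * h y) (g := fun y => W₂ y * h y) hiW1h hiW2h,
      integral_const_mul,
      integral_sub (f := W₁) (g := W₂) hiW1 hiW2]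
  have hS3 : ∫ y, (W₁ y)⁻¹ * ((W₂ y - W₁ y) * opEinv μ W₂ h y) ∂μ
      = (K - I) - (I / A₂ - 2 * V * J₂ / (A₂ * B₂)) * (A₁ - A₂)
        - (J₂ / B₂) * (L - V) := by
    have hfe : (fun y => (W₁ y)⁻¹ * ((W₂ y - W₁ y) * opEinv μ W₂ h y))
        = fun y => ((W₁ y)⁻¹ * (W₂ y * h y) - h y)
            - (I / A₂ - 2 * V * J₂ / (A₂ * B₂)) * ((W₁ y)⁻¹ - (W₂ y)⁻¹)
            - (J₂ / B₂) * ((W₁ y)⁻¹ * W₂ y - 1) := by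
      funext y
      have h1 : W₁ y ≠ 0 := (hW₁pos y).ne'
      have h2 : W₂ y ≠ 0 := (hW₂pos y).ne'
      simp only [opEinv, ← hJ2def, ← hB2def, ← hIdef, ← hA2def, ← hVdef]
      field_simp
      ring
    rw [hfe, integral_sub
        (f := fun y => (W₁ y)⁻¹ * (W₂ y * h y) - h y
          - (I / A₂ - 2 * V * J₂ / (A₂ * B₂)) * ((W₁ y)⁻¹ - (W₂ y)⁻¹))
        (g := fun y => J₂ / B₂ * ((W₁ y)⁻¹ * W₂ y - 1))
        (by exact (hiK.sub hh).sub ((hiW1inv.sub hiW2inv).const_mul _))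
        (by exact (hiL.sub (integrable_const (1 : ℝ))).const_mul _),
      integral_sub (f := fun y => (W₁ y)⁻¹ * (W₂ y * h y) - h y)
        (g := fun y => (I / A₂ - 2 * V * J₂ / (A₂ * B₂)) * ((W₁ y)⁻¹ - (W₂ y)⁻¹))
        (by exact hiK.sub hh) (by exact (hiW1inv.sub hiW2inv).const_mul _),
      integral_sub (f := fun y => (W₁ y)⁻¹ * (W₂ y * h y)) (g := h) hiK hh,
      integral_const_mul,
      integral_sub (f := fun y => (W₁ y)⁻¹) (g := fun y => (W₂ y)⁻¹) hiW1inv hiW2inv,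
      integral_const_mul,
      integral_sub (f := fun y => (W₁ y)⁻¹ * W₂ y) (g := fun _ => (1 : ℝ))
        hiL (integrable_const (1 : ℝ)), hVint]
  -- put everything together
  simp only [opEinv, opGminus, opGplus, ← hIdef, ← hJ1def, ← hJ2def, ← hA1def, ← hA2def,
    ← hB1def, ← hB2def, ← hVdef] at hSf hSW1f hS3 ⊢
  rw [hSf, hSW1f, hS3]
  field_simp
  ring
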